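/- arXiv:1706.00475 — 6 statements merged into one kernel-verified Lean document; each statement's English description precedes it below -/
import Mathlib

section
/- Let Λ be an artin algebra and Q̃ the direct sum of all indecomposable projective-injective Λ-modules up to isomorphism. If P is a projective module lying in C_Λ = Gen(Q̃) ∩ Cogen(Q̃), then P is injective. Dually, if I is an injective module lying in C_Λ, then I is projective. -/
open Function LinearMap

section Prelim

variable (Λ : Type) [Ring Λ]

/-- A module that is both projective and injective. -/
def IsProjInj (M : Type) [AddCommGroup M] [Module Λ M] : Prop :=
  Module.Projective Λ M ∧ Module.Injective Λ M

/-- `X` is generated by the projective-injective modules: it is a quotient of a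
finitely generated projective-injective module (equivalently, of a finite direct sum of
copies of `Q̃`). -/
def GenByProjInj (X : Type) [AddCommGroup X] [Module Λ X] : Prop :=
  ∃ Q : ModuleCat.{0} Λ, Module.Finite Λ Q ∧ IsProjInj Λ Q ∧
    ∃ f : Q →ₗ[Λ] X, Surjective f

/-- `X` is cogenerated by the projective-injective modules: it embeds into a
finitely generated projective-injective module. -/
def CogenByProjInj (X : Type) [AddCommGroup X] [Module Λ X] : Prop :=
  ∃ Q : ModuleCat.{0} Λ, Module.Finite Λ Q ∧ IsProjInj Λ Q ∧
    ∃ f : X →ₗ[Λ] Q, Injective f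

/-- Membership in `C_Λ = Gen(Q̃) ∩ Cogen(Q̃)`. -/
def MemC (X : Type) [AddCommGroup X] [Module Λ X] : Prop :=
  GenByProjInj Λ X ∧ CogenByProjInj Λ X

/-- `pdLEcat Λ n X` : `X` has projective dimension at most `n`. -/
def pdLEcat : ℕ → ModuleCat.{0} Λ → Prop
  | 0, X => Module.Projective Λ X
  | n+1, X => ∃ (P : ModuleCat.{0} Λ) (g : P →ₗ[Λ] X),
      Module.Projective Λ P ∧ Module.Finite Λ P ∧ Surjective g ∧
      pdLEcat n (ModuleCat.of Λ (↥(LinearMap.ker g)))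

/-- Projective dimension at most `n`, for a bare module. -/
def pdLE (n : ℕ) (X : Type) [AddCommGroup X] [Module Λ X] : Prop :=
  pdLEcat Λ n (ModuleCat.of Λ X)

/-- `idLEcat Λ n X` : `X` has injective dimension at most `n`. -/
def idLEcat : ℕ → ModuleCat.{0} Λ → Prop
  | 0, X => Module.Injective Λ X
  | n+1, X => ∃ (I : ModuleCat.{0} Λ) (f : X →ₗ[Λ] I),
      Module.Injective Λ I ∧ Injective f ∧
      idLEcat n (ModuleCat.of Λ (↥I ⧸ LinearMap.range f))

/-- Injective dimension at most `n`, for a bare module. -/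
def idLE (n : ℕ) (X : Type) [AddCommGroup X] [Module Λ X] : Prop :=
  idLEcat Λ n (ModuleCat.of Λ X)

/-- Global dimension at most `d` (on finitely generated modules). -/
def GlobalDimLE (d : ℕ) : Prop :=
  ∀ X : ModuleCat.{0} Λ, Module.Finite Λ X → pdLEcat Λ d X

/-- Global dimension exactly `d`. -/
def GlobalDimEq (d : ℕ) : Prop :=
  GlobalDimLE Λ d ∧ ∀ m, GlobalDimLE Λ m → d ≤ m

/-- `Ext¹_Λ(Y, X) = 0`, expressed by the splitting of all short exact sequences
`0 → X → E → Y → 0`. -/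
def Ext1Vanish (Y X : Type) [AddCommGroup Y] [Module Λ Y]
    [AddCommGroup X] [Module Λ X] : Prop :=
  ∀ (E : ModuleCat.{0} Λ) (f : X →ₗ[Λ] E) (g : E →ₗ[Λ] Y),
    Injective f → Surjective g → LinearMap.range f = LinearMap.ker g →
    ∃ r : E →ₗ[Λ] X, r ∘ₗ f = LinearMap.id

/-- `M` belongs to `add T`: `M` is a direct summand of a finite direct sum of copies of `T`. -/
def InAddOf (T M : Type) [AddCommGroup T] [Module Λ T]
    [AddCommGroup M] [Module Λ M] : Prop :=
  ∃ (m : ℕ) (p : (Fin m → T) →ₗ[Λ] M) (s : M →ₗ[Λ] (Fin m → T)),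
    p ∘ₗ s = LinearMap.id

/-- A (classical) tilting module. -/
def IsTilting (T : Type) [AddCommGroup T] [Module Λ T] : Prop :=
  pdLE Λ 1 T ∧ Ext1Vanish Λ T T ∧
  ∃ (T0 T1 : ModuleCat.{0} Λ) (f : Λ →ₗ[Λ] T0) (g : T0 →ₗ[Λ] T1),
    InAddOf Λ T T0 ∧ InAddOf Λ T T1 ∧ Injective f ∧ Surjective g ∧
    LinearMap.range f = LinearMap.ker g

/-- A (classical) cotilting module. -/
def IsCotilting (T : Type) [AddCommGroup T] [Module Λ T] : Prop :=
  idLE Λ 1 T ∧ Ext1Vanish Λ T T ∧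
  ∀ (I : ModuleCat.{0} Λ), Module.Finite Λ I → Module.Injective Λ I →
    ∃ (C0 C1 : ModuleCat.{0} Λ) (u : C0 →ₗ[Λ] C1) (v : C1 →ₗ[Λ] I),
      InAddOf Λ T C0 ∧ InAddOf Λ T C1 ∧ Injective u ∧ Surjective v ∧
      LinearMap.range u = LinearMap.ker v

/-- Dominant dimension at least `2`: there is an exact sequence `0 → Λ → Q₀ → Q₁`
with `Q₀, Q₁` projective-injective. -/
def DomdimGE2 : Prop :=
  ∃ (Q0 Q1 : ModuleCat.{0} Λ) (f : Λ →ₗ[Λ] Q0) (g : Q0 →ₗ[Λ] Q1),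
    Module.Finite Λ Q0 ∧ IsProjInj Λ Q0 ∧ Module.Finite Λ Q1 ∧ IsProjInj Λ Q1 ∧
    Injective f ∧ LinearMap.range f = LinearMap.ker g

/-- An indecomposable (nonzero) module: the only idempotent endomorphisms are `0` and `id`. -/
def Indecomposable (M : Type) [AddCommGroup M] [Module Λ M] : Prop :=
  (∃ x : M, x ≠ 0) ∧ ∀ e : M →ₗ[Λ] M, e ∘ₗ e = e → e = 0 ∨ e = LinearMap.id

/-- A right minimal morphism. -/
def RightMinimal {B C : Type} [AddCommGroup B] [Module Λ B] [AddCommGroup C] [Module Λ C]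
    (f : B →ₗ[Λ] C) : Prop :=
  ∀ g : B →ₗ[Λ] B, f ∘ₗ g = f → Bijective g

/-- A left minimal morphism. -/
def LeftMinimal {A B : Type} [AddCommGroup A] [Module Λ A] [AddCommGroup B] [Module Λ B]
    (f : A →ₗ[Λ] B) : Prop :=
  ∀ g : B →ₗ[Λ] B, g ∘ₗ f = f → Bijective g

/-- `f : P → X` is a projective cover: `P` is projective, `f` is surjective and its kernel
is superfluous. -/
def IsProjCover {P X : Type} [AddCommGroup P] [Module Λ P] [AddCommGroup X] [Module Λ X]
    (f : P →ₗ[Λ] X) : Prop :=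
  Module.Projective Λ P ∧ Surjective f ∧
    ∀ N : Submodule Λ P, N ⊔ LinearMap.ker f = ⊤ → N = ⊤

/-- `f : X → I` is an injective envelope: `I` is injective, `f` is injective and its image is
essential. -/
def IsInjEnv {X I : Type} [AddCommGroup X] [Module Λ X] [AddCommGroup I] [Module Λ I]
    (f : X →ₗ[Λ] I) : Prop :=
  Module.Injective Λ I ∧ Injective f ∧
    ∀ N : Submodule Λ I, N ⊓ LinearMap.range f = ⊥ → N = ⊥

/-- An essential submodule. -/
def IsEssentialSub {M : Type} [AddCommGroup M] [Module Λ M] (N : Submodule Λ M) : Prop :=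
  ∀ N' : Submodule Λ M, N ⊓ N' = ⊥ → N' = ⊥

/-- A uniserial module: submodules are totally ordered by inclusion. -/
def Uniserial (M : Type) [AddCommGroup M] [Module Λ M] : Prop :=
  ∀ N₁ N₂ : Submodule Λ M, N₁ ≤ N₂ ∨ N₂ ≤ N₁

/-- The radical of a module: the intersection of its maximal submodules. -/
def radSub (M : Type) [AddCommGroup M] [Module Λ M] : Submodule Λ M :=
  sInf {N : Submodule Λ M | IsCoatom N}

/-- An almost split (Auslander-Reiten) sequence `0 → A → E → C → 0`. -/
def IsAlmostSplitSeq {A E C : Type} [AddCommGroup A] [Module Λ A]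
    [AddCommGroup E] [Module Λ E] [AddCommGroup C] [Module Λ C]
    (f : A →ₗ[Λ] E) (g : E →ₗ[Λ] C) : Prop :=
  Injective f ∧ Surjective g ∧ LinearMap.range f = LinearMap.ker g ∧
  (¬∃ r : E →ₗ[Λ] A, r ∘ₗ f = LinearMap.id) ∧
  Indecomposable Λ A ∧ Indecomposable Λ C ∧
  ∀ (Z : ModuleCat.{0} Λ) (h : Z →ₗ[Λ] C), Module.Finite Λ Z →
    (¬∃ s : C →ₗ[Λ] Z, h ∘ₗ s = LinearMap.id) → ∃ l : (Z →ₗ[Λ] E), g ∘ₗ l = h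

/-- `N` is the Auslander-Reiten translate `τ M` of `M`: writing `M ≅ P ⊕ (⊕ᵢ Cᵢ)` with `P`
projective and `Cᵢ` indecomposable ends of almost split sequences `0 → Aᵢ → Eᵢ → Cᵢ → 0`,
we have `N ≅ ⊕ᵢ Aᵢ`. -/
def IsTauOf (N M : Type) [AddCommGroup N] [Module Λ N] [AddCommGroup M] [Module Λ M] : Prop :=
  ∃ (r : ℕ) (P : ModuleCat.{0} Λ) (A E C : Fin r → ModuleCat.{0} Λ)
    (f : ∀ i, (A i : Type) →ₗ[Λ] (E i : Type)) (g : ∀ i, (E i : Type) →ₗ[Λ] (C i : Type)),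
    Module.Projective Λ P ∧ (∀ i, IsAlmostSplitSeq Λ (f i) (g i)) ∧
    Nonempty (M ≃ₗ[Λ] (Prod (P : Type) ((i : Fin r) → (C i : Type)))) ∧
    Nonempty (N ≃ₗ[Λ] (∀ i, (A i : Type)))

end Prelim

section HomModule

variable {R : Type} [Ring R] {T M : Type} [AddCommGroup T] [Module R T]
  [AddCommGroup M] [Module R M]

/-- `Hom_R(T, M)` as a left module over `B = End_R(T)ᵒᵖ`, via precomposition. -/
instance instSMulHomEndOp : SMul (Module.End R T)ᵐᵒᵖ (T →ₗ[R] M) :=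
  ⟨fun b f => f ∘ₗ b.unop⟩

lemma endOp_smul_def (b : (Module.End R T)ᵐᵒᵖ) (f : T →ₗ[R] M) :
    b • f = f ∘ₗ b.unop := rfl

instance instMulActionHomEndOp : MulAction (Module.End R T)ᵐᵒᵖ (T →ₗ[R] M) where
  one_smul f := by ext x; rfl
  mul_smul b c f := by ext x; rfl

instance instDistribMulActionHomEndOp :
    DistribMulAction (Module.End R T)ᵐᵒᵖ (T →ₗ[R] M) where
  smul_zero b := by ext x; rfl
  smul_add b f g := by ext x; rfl

instance instModuleHomEndOp : Module (Module.End R T)ᵐᵒᵖ (T →ₗ[R] M) where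
  add_smul b c f := by ext x; simp [endOp_smul_def]
  zero_smul f := by ext x; simp [endOp_smul_def]

end HomModule

lemma inj_of_retract {R Q X : Type} [Ring R] [AddCommGroup Q] [Module R Q]
    [AddCommGroup X] [Module R X] [Module.Injective R Q]
    (i : X →ₗ[R] Q) (r : Q →ₗ[R] X) (H : r ∘ₗ i = LinearMap.id) : Module.Injective R X := by
  constructor
  intro A B _ _ _ _ f hf g
  obtain ⟨h, hh⟩ := Module.Injective.out f hf (i ∘ₗ g)
  refine ⟨r ∘ₗ h, fun x => ?_⟩
  have := congrArg r (hh x)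
  simpa using congrArg (fun m => m (g x)) H ▸ this

theorem stmt1 (Λ : Type) [Ring Λ] (k : Type) [CommRing k] [IsArtinianRing k] [Algebra k Λ]
    [Module.Finite k Λ]
    (X : Type) [AddCommGroup X] [Module Λ X] [Module.Finite Λ X]
    (hX : MemC Λ X) :
    (Module.Projective Λ X → Module.Injective Λ X) ∧
    (Module.Injective Λ X → Module.Projective Λ X) := by
  obtain ⟨⟨Qg, _, ⟨hQgP, hQgI⟩, f, hf⟩, ⟨Qc, _, ⟨hQcP, hQcI⟩, g, hg⟩⟩ := hX
  constructor
  · intro hXproj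
    obtain ⟨s, hs⟩ := Module.projective_lifting_property f (LinearMap.id) hf
    exact inj_of_retract (R := Λ) s f hs
  · intro hXinj
    obtain ⟨r, hr⟩ := Module.Injective.out g hg (LinearMap.id (R := Λ) (M := X))
    exact Module.Projective.of_split g r (by ext x; exact hr x)
end

section
/- Let Λ be an artin algebra, X a module in C_Λ = Gen(Q̃) ∩ Cogen(Q̃), and Y a Λ-module with projective dimension exactly 1. Then Ext¹_Λ(Y, X) = 0. -/
open Function LinearMap

theorem key (Λ : Type) [Ring Λ]
    (X : Type) [AddCommGroup X] [Module Λ X]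
    (hgen : ∃ Q : ModuleCat.{0} Λ, Module.Finite Λ Q ∧
      (Module.Projective Λ Q ∧ Module.Injective Λ Q) ∧ ∃ q : Q →ₗ[Λ] X, Surjective q)
    (Y : Type) [AddCommGroup Y] [Module Λ Y]
    (hY1 : ∃ (P : ModuleCat.{0} Λ) (p : P →ₗ[Λ] Y),
      Module.Projective Λ P ∧ Module.Finite Λ P ∧ Surjective p ∧
      Module.Projective Λ (↥(LinearMap.ker p)))
    (E : ModuleCat.{0} Λ) (f : X →ₗ[Λ] E) (g : E →ₗ[Λ] Y)
    (hf : Injective f) (hg : Surjective g) (hrange : LinearMap.range f = LinearMap.ker g) :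
    ∃ r : E →ₗ[Λ] X, r ∘ₗ f = LinearMap.id := by
  obtain ⟨Q, _, ⟨hQproj, hQinj⟩, q, hq⟩ := hgen
  obtain ⟨P, p, hPproj, _, hp, hKproj⟩ := hY1
  obtain ⟨h, hh⟩ := Module.projective_lifting_property g p hg
  set K := LinearMap.ker p
  have hmem : ∀ x : K, h x ∈ LinearMap.range f := by
    intro x
    rw [hrange, LinearMap.mem_ker]
    have : g (h x) = p x := congrArg (fun φ => φ (x : P)) (congrArg DFunLike.coe hh)
    rw [this, x.2]
  let eX : X ≃ₗ[Λ] LinearMap.range f := LinearEquiv.ofInjective f hf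
  have heX : ∀ y : X, f y = ((eX y : E)) := fun y => rfl
  let k : K →ₗ[Λ] X := eX.symm.toLinearMap ∘ₗ
    LinearMap.codRestrict (LinearMap.range f) (h ∘ₗ K.subtype) (fun x => hmem x)
  have hk : ∀ x : K, f (k x) = h x := by
    intro x
    rw [heX]
    show ((eX (eX.symm ⟨h x, hmem x⟩) : E)) = h x
    rw [eX.apply_symm_apply]
  obtain ⟨k₁, hk₁⟩ := Module.projective_lifting_property q k hq
  obtain ⟨k₂, hk₂⟩ := hQinj.out K.subtype Subtype.val_injective k₁
  set k' : P →ₗ[Λ] X := q ∘ₗ k₂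
  have hk' : ∀ x : K, k' (x : P) = k x := by
    intro x
    show q (k₂ (K.subtype x)) = k x
    rw [hk₂ x]
    exact congrArg (fun φ => φ x) (congrArg DFunLike.coe hk₁)
  have hker : K ≤ LinearMap.ker (h - f ∘ₗ k') := by
    intro x hx
    simp only [LinearMap.mem_ker, LinearMap.sub_apply, LinearMap.comp_apply]
    rw [show k' x = k ⟨x, hx⟩ from hk' ⟨x, hx⟩, hk ⟨x, hx⟩]
    simp
  let e := p.quotKerEquivOfSurjective hp
  let s : Y →ₗ[Λ] E := (K.liftQ (h - f ∘ₗ k') hker) ∘ₗ e.symm.toLinearMap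
  have hs : ∀ x : P, s (p x) = h x - f (k' x) := by
    intro x
    have he : e (Submodule.Quotient.mk x) = p x := rfl
    show (K.liftQ (h - f ∘ₗ k') hker) (e.symm (p x)) = _
    rw [← he, e.symm_apply_apply]
    simp [Submodule.liftQ_apply]
  have hfg : ∀ y : X, g (f y) = 0 := by
    intro y
    have : f y ∈ LinearMap.ker g := hrange ▸ LinearMap.mem_range_self f y
    exact this
  have hgs : ∀ y : Y, g (s y) = y := by
    intro y
    obtain ⟨x, rfl⟩ := hp y
    rw [hs, map_sub, hfg]
    have : g (h x) = p x := congrArg (fun φ => φ x) (congrArg DFunLike.coe hh)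
    rw [this, sub_zero]
  have hmem2 : ∀ z : E, z - s (g z) ∈ LinearMap.range f := by
    intro z
    rw [hrange, LinearMap.mem_ker, map_sub, hgs, sub_self]
  let r : E →ₗ[Λ] X := eX.symm.toLinearMap ∘ₗ
    LinearMap.codRestrict (LinearMap.range f) (LinearMap.id - s ∘ₗ g) (fun z => hmem2 z)
  refine ⟨r, ?_⟩
  ext y
  show eX.symm ⟨f y - s (g (f y)), _⟩ = y
  have : f y - s (g (f y)) = f y := by rw [hfg, map_zero, sub_zero]
  rw [eX.symm_apply_eq]
  exact Subtype.ext (by show f y - s (g (f y)) = ((eX y : E)); rw [this]; exact heX y)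

theorem stmt3 (Λ : Type) [Ring Λ] (k : Type) [CommRing k] [IsArtinianRing k] [Algebra k Λ]
    [Module.Finite k Λ]
    (X : Type) [AddCommGroup X] [Module Λ X] [Module.Finite Λ X] (hX : MemC Λ X)
    (Y : Type) [AddCommGroup Y] [Module Λ Y] [Module.Finite Λ Y]
    (hY1 : pdLE Λ 1 Y) (hY0 : ¬ Module.Projective Λ Y) :
    Ext1Vanish Λ Y X := by
  intro E f' g' hf hg hr
  obtain ⟨Q, hQf, hQ, q, hq⟩ := hX.1
  obtain ⟨P, p, h1, h2, h3, h4⟩ := hY1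
  exact key Λ X ⟨Q, hQf, hQ, q, hq⟩ Y ⟨P, p, h1, h2, h3, h4⟩ E f' g' hf hg hr
end

section
/- Let 0 → A → B → C → 0 be a non-split short exact sequence of modules over an artin algebra. If the endomorphism ring of A is local, then the map B → C is right minimal; if the endomorphism ring of C is local, then the map A → B is left minimal. -/
open Function LinearMap

lemma bij_of_isUnit' {R A B : Type*} [Ring R] [AddCommGroup A] [Module R A]
    [AddCommGroup B] [Module R B] (F : A →ₗ[R] B) (S : B →ₗ[R] A)
    (h : IsUnit (LinearMap.id + S ∘ₗ F : A →ₗ[R] A)) :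
    Function.Bijective (LinearMap.id + F ∘ₗ S : B →ₗ[R] B) := by
  obtain ⟨u, hu⟩ := h
  set v : A →ₗ[R] A := ↑u⁻¹ with hv
  have h1 : ∀ z : A, v (z + S (F z)) = z := by
    intro z
    have h' : v ((LinearMap.id + S ∘ₗ F : A →ₗ[R] A) z) = z := by
      rw [← hu, ← Module.End.mul_apply, u.inv_mul]; rfl
    simpa only [LinearMap.add_apply, LinearMap.comp_apply, LinearMap.id_apply] using h'
  have h2 : ∀ z : A, v z + S (F (v z)) = z := by
    intro z
    have h' : (LinearMap.id + S ∘ₗ F : A →ₗ[R] A) (v z) = z := by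
      rw [← hu, ← Module.End.mul_apply, u.mul_inv]; rfl
    simpa only [LinearMap.add_apply, LinearMap.comp_apply, LinearMap.id_apply] using h'
  have hG : ∀ x : B, (x + F (S x)) - F (v (S (x + F (S x)))) = x := by
    intro x
    have e1 : S (x + F (S x)) = S x + S (F (S x)) := by simp
    rw [e1, h1 (S x)]; abel
  have hG' : ∀ x : B, (x - F (v (S x))) + F (S (x - F (v (S x)))) = x := by
    intro x
    have e2 : S (F (v (S x))) = S x - v (S x) := eq_sub_of_add_eq' (h2 (S x))
    have e1 : S (x - F (v (S x))) = S x - (S x - v (S x)) := by rw [map_sub, e2]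
    rw [e1, map_sub F, map_sub F]; abel
  have happ : ∀ x : B, (LinearMap.id + F ∘ₗ S : B →ₗ[R] B) x = x + F (S x) := by
    intro x; simp
  have hL : Function.LeftInverse (fun b : B => b - F (v (S b)))
      ⇑(LinearMap.id + F ∘ₗ S : B →ₗ[R] B) := fun x => by
    simp only [happ]; exact hG x
  exact ⟨hL.injective, fun y => ⟨y - F (v (S y)), by rw [happ]; exact hG' y⟩⟩

lemma exists_factor' {R B C M : Type*} [Ring R] [AddCommGroup B] [Module R B]
    [AddCommGroup C] [Module R C] [AddCommGroup M] [Module R M]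
    (g : B →ₗ[R] C) (hg : Surjective g) (u : B →ₗ[R] M) (hk : ker g ≤ ker u) :
    ∃ t : C →ₗ[R] M, t ∘ₗ g = u := by
  let e0 : (B ⧸ ker g) →ₗ[R] C := (ker g).liftQ g le_rfl
  have he0 : Bijective e0 := by
    constructor
    · rw [← LinearMap.ker_eq_bot]
      exact Submodule.ker_liftQ_eq_bot _ _ _ le_rfl
    · intro c; obtain ⟨b, rfl⟩ := hg c; exact ⟨Submodule.Quotient.mk b, rfl⟩
  let e := LinearEquiv.ofBijective e0 he0
  refine ⟨(ker g).liftQ u hk ∘ₗ e.symm.toLinearMap, ?_⟩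
  ext b
  have hb : e.symm (g b) = Submodule.Quotient.mk b := by
    apply e.injective
    rw [e.apply_symm_apply]
    simp [e, e0, LinearEquiv.ofBijective_apply]
  simp [hb]

theorem stmt4 (Λ : Type) [Ring Λ] (k : Type) [CommRing k] [IsArtinianRing k] [Algebra k Λ]
    [Module.Finite k Λ]
    (A B C : Type) [AddCommGroup A] [Module Λ A] [Module.Finite Λ A]
    [AddCommGroup B] [Module Λ B] [Module.Finite Λ B]
    [AddCommGroup C] [Module Λ C] [Module.Finite Λ C]
    (f : A →ₗ[Λ] B) (g : B →ₗ[Λ] C)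
    (hf : Injective f) (hg : Surjective g)
    (hex : LinearMap.range f = LinearMap.ker g)
    (hns : ¬∃ r : B →ₗ[Λ] A, r ∘ₗ f = LinearMap.id) :
    (IsLocalRing (Module.End Λ A) → RightMinimal Λ g) ∧
    (IsLocalRing (Module.End Λ C) → LeftMinimal Λ f) := by
  set eA := LinearEquiv.ofInjective f hf with heA
  have key : ∀ y : LinearMap.range f, f (eA.symm y) = ↑y := by
    intro y
    conv_rhs => rw [← eA.apply_symm_apply y]
    rfl
  constructor
  · intro hloc h hgh
    haveI := hloc
    set u : B →ₗ[Λ] B := h - LinearMap.id with hu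
    have hmem : ∀ b, u b ∈ LinearMap.range f := by
      intro b
      rw [hex, LinearMap.mem_ker]
      have h1 : g (h b) = g b := DFunLike.congr_fun hgh b
      simp [u, h1]
    let s : B →ₗ[Λ] A := eA.symm.toLinearMap ∘ₗ u.codRestrict (LinearMap.range f) hmem
    have hfs : f ∘ₗ s = u := by
      ext b
      exact key ⟨u b, hmem b⟩
    have hh : h = LinearMap.id + f ∘ₗ s := by rw [hfs, hu]; abel
    rcases IsLocalRing.isUnit_or_isUnit_of_add_one
      (a := (-(s ∘ₗ f) : Module.End Λ A)) (b := 1 + s ∘ₗ f) (by abel) with hcase | hcase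
    · exfalso
      have hun : IsUnit (s ∘ₗ f : Module.End Λ A) := by simpa using hcase.neg
      obtain ⟨w, hw⟩ := hun
      refine hns ⟨(↑w⁻¹ : Module.End Λ A) ∘ₗ s, ?_⟩
      rw [LinearMap.comp_assoc, ← hw, ← Module.End.mul_eq_comp, w.inv_mul]
      rfl
    · have hun : IsUnit (LinearMap.id + s ∘ₗ f : A →ₗ[Λ] A) := by
        rwa [Module.End.one_eq_id] at hcase
      rw [hh]
      exact bij_of_isUnit' f s hun
  · intro hloc h hhf
    haveI := hloc
    set u : B →ₗ[Λ] B := h - LinearMap.id with hu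
    have hk : LinearMap.ker g ≤ LinearMap.ker u := by
      intro b hb
      rw [← hex] at hb
      obtain ⟨a, rfl⟩ := hb
      have h1 : h (f a) = f a := DFunLike.congr_fun hhf a
      simp [u, h1]
    obtain ⟨t, ht⟩ := exists_factor' g hg u hk
    have hh : h = LinearMap.id + t ∘ₗ g := by rw [ht, hu]; abel
    rcases IsLocalRing.isUnit_or_isUnit_of_add_one
      (a := (-(g ∘ₗ t) : Module.End Λ C)) (b := 1 + g ∘ₗ t) (by abel) with hcase | hcase
    · exfalso
      have hun : IsUnit (g ∘ₗ t : Module.End Λ C) := by simpa using hcase.neg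
      obtain ⟨w, hw⟩ := hun
      set sc : C →ₗ[Λ] B := t ∘ₗ (↑w⁻¹ : Module.End Λ C) with hsc
      have hsec : g ∘ₗ sc = LinearMap.id := by
        rw [hsc, ← LinearMap.comp_assoc, ← hw, ← Module.End.mul_eq_comp, w.mul_inv]
        rfl
      have hmem : ∀ b, ((LinearMap.id - sc ∘ₗ g : B →ₗ[Λ] B)) b ∈ LinearMap.range f := by
        intro b
        rw [hex, LinearMap.mem_ker]
        have h1 : g (sc (g b)) = g b := DFunLike.congr_fun hsec (g b)
        simp [h1]
      refine hns ⟨eA.symm.toLinearMap ∘ₗ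
        (LinearMap.id - sc ∘ₗ g).codRestrict (LinearMap.range f) hmem, ?_⟩
      ext a
      have h0 : g (f a) = 0 := by
        have : f a ∈ LinearMap.ker g := hex ▸ LinearMap.mem_range_self f a
        exact this
      have hv : ((LinearMap.id - sc ∘ₗ g : B →ₗ[Λ] B)) (f a) = f a := by simp [h0]
      show eA.symm ⟨((LinearMap.id - sc ∘ₗ g : B →ₗ[Λ] B)) (f a), hmem (f a)⟩ = a
      rw [LinearEquiv.symm_apply_eq]
      exact Subtype.ext (hv.trans rfl)
    · have hun : IsUnit (LinearMap.id + g ∘ₗ t : C →ₗ[Λ] C) := by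
        rwa [Module.End.one_eq_id] at hcase
      rw [hh]
      exact bij_of_isUnit' t g hun
end

section
/- Let 0 → Y → Q → X → 0 be a non-split short exact sequence of finitely generated modules over an artin algebra, where Q is projective. If Y is indecomposable and the map Y → Q is left minimal, then X is indecomposable and the map Q → X is right minimal (i.e., a projective cover). -/
open Function LinearMap

-- Step 1: semisimple transfer lemma
section
variable {k : Type} [CommRing k] (N : Ideal k)
  {M : Type} [AddCommGroup M] [Module k M] (hM : Module.IsTorsionBySet k M N)

/-- submodules over k and over k/N coincide -/
noncomputable def subOrderIso :
    letI := hM.module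
    Submodule (k ⧸ N) M ≃o Submodule k M :=
  letI := hM.module
  { toFun := fun p => p.restrictScalars k
    invFun := fun q =>
      { carrier := q
        add_mem' := fun ha hb => q.add_mem ha hb
        zero_mem' := q.zero_mem
        smul_mem' := by
          intro c x hx
          induction c using Quotient.inductionOn' with
          | h b =>
            show (Ideal.Quotient.mk N b) • x ∈ q
            rw [hM.mk_smul]
            exact q.smul_mem b hx }
    left_inv := fun p => by ext x; rfl
    right_inv := fun q => by ext x; rfl
    map_rel_iff' := Iff.rfl }
end

lemma semisimpleModule_of_torsion {k : Type} [CommRing k] (N : Ideal k) {M : Type}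
    [AddCommGroup M] [Module k M] (hM : Module.IsTorsionBySet k M N)
    [IsSemisimpleRing (k ⧸ N)] : IsSemisimpleModule k M := by
  letI := hM.module
  haveI : IsSemisimpleModule (k ⧸ N) M := inferInstance
  exact (isSemisimpleModule_iff k M).mpr (subOrderIso N hM).complementedLattice

theorem key_noeth (k : Type) [CommRing k] [IsArtinianRing k] :
    ∀ (n : ℕ) (M : Type) [AddCommGroup M] [Module k M] [_i : IsArtinian k M],
      (nilradical k) ^ n • (⊤ : Submodule k M) = ⊥ → IsNoetherian k M := by
  haveI : IsReduced (k ⧸ nilradical k) :=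
    (Ideal.isRadical_iff_quotient_reduced _).mp
      (show (Ideal.radical 0).IsRadical from Ideal.radical_isRadical 0)
  haveI : IsSemisimpleRing (k ⧸ nilradical k) :=
    IsArtinianRing.isSemisimpleRing_of_isReduced (k ⧸ nilradical k)
  intro n
  induction n with
  | zero =>
    intro M _ _ _ h
    rw [pow_zero, Ideal.one_eq_top, Submodule.top_smul] at h
    haveI : Subsingleton M := by
      constructor; intro a b
      have ha : a ∈ (⊥ : Submodule k M) := h ▸ Submodule.mem_top
      have hb : b ∈ (⊥ : Submodule k M) := h ▸ Submodule.mem_top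
      rw [Submodule.mem_bot] at ha hb; rw [ha, hb]
    exact inferInstance
  | succ n ih =>
    intro M _ _ _ h
    set N := nilradical k with hN
    set S : Submodule k M := N • ⊤ with hS
    have h1 : IsNoetherian k S := by
      apply ih S
      have hmap : Submodule.map S.subtype (N ^ n • (⊤ : Submodule k S)) = ⊥ := by
        rw [Submodule.map_smul'', Submodule.map_subtype_top]
        rw [hS, ← Submodule.smul_assoc, Ideal.smul_eq_mul, ← pow_succ]
        exact h
      have := Submodule.map_injective_of_injective S.injective_subtype
      apply this
      rw [hmap, Submodule.map_bot]
    have ht : Module.IsTorsionBySet k (M ⧸ S) N := by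
      intro x a
      induction x using Quotient.inductionOn' with
      | h m =>
        show (a : k) • (Submodule.Quotient.mk m : M ⧸ S) = 0
        rw [← Submodule.Quotient.mk_smul, Submodule.Quotient.mk_eq_zero]
        exact Submodule.smul_mem_smul a.2 Submodule.mem_top
    have h2 : IsNoetherian k (M ⧸ S) := by
      haveI := semisimpleModule_of_torsion N ht
      have htfae := IsSemisimpleModule.finite_tfae (R := k) (M := M ⧸ S)
      have h21 : IsArtinian k (M ⧸ S) ↔ IsNoetherian k (M ⧸ S) := htfae.out 2 1
      exact h21.mp inferInstance
    exact (isNoetherian_iff_submodule_quotient S).mpr ⟨h1, h2⟩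

theorem hopkins (k : Type) [CommRing k] [IsArtinianRing k]
    (M : Type) [AddCommGroup M] [Module k M] [IsArtinian k M] : IsNoetherian k M := by
  obtain ⟨n, hn⟩ := IsArtinianRing.isNilpotent_jacobson_bot (R := k)
  have hle : (nilradical k) ^ n ≤ ⊥ := by
    calc (nilradical k) ^ n ≤ (Ideal.jacobson ⊥) ^ n :=
          Ideal.pow_right_mono (by exact Ideal.radical_le_jacobson (I := (⊥ : Ideal k))) n
      _ = ⊥ := hn
  exact key_noeth k n M (by rw [le_bot_iff.mp hle, Submodule.bot_smul])



section MoreAux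

theorem artinAlg_noetherian (Λ : Type) [Ring Λ] (k : Type) [CommRing k] [IsArtinianRing k]
    [Algebra k Λ] [Module.Finite k Λ] (M : Type) [AddCommGroup M] [Module Λ M]
    [Module.Finite Λ M] : IsNoetherian Λ M := by
  letI : Module k M := Module.compHom M (algebraMap k Λ)
  letI : IsScalarTower k Λ M := ⟨fun a l m => by
    show (a • l) • m = algebraMap k Λ a • (l • m)
    rw [Algebra.smul_def, mul_smul]⟩
  haveI : Module.Finite k M := Module.Finite.trans Λ M
  haveI : IsArtinian k M := inferInstance
  haveI := hopkins k M
  exact isNoetherian_of_tower k this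

theorem fitting_dich {Λ : Type} [Ring Λ] {M : Type} [AddCommGroup M] [Module Λ M]
    [IsArtinian Λ M] [IsNoetherian Λ M] (hM : Indecomposable Λ M) (φ : M →ₗ[Λ] M) :
    (∃ n, 0 < n ∧ φ ^ n = 0) ∨ Bijective φ := by
  obtain ⟨n, hn, hcompl⟩ : ∃ n, 0 < n ∧ IsCompl (ker (φ ^ n)) (range (φ ^ n)) := by
    obtain ⟨m, hm⟩ := Filter.eventually_atTop.mp (φ.eventually_isCompl_ker_pow_range_pow)
    exact ⟨m + 1, Nat.succ_pos m, hm (m+1) (Nat.le_succ m)⟩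
  set p := range (φ ^ n) with hp
  set q := ker (φ ^ n) with hq
  set e : M →ₗ[Λ] M := p.subtype ∘ₗ (Submodule.projectionOnto p q hcompl.symm) with he
  have hleft : ∀ u : p, e u = u := fun u => by
    simp [he, Submodule.projectionOnto_apply_left]
  have hright : ∀ x ∈ q, e x = 0 := fun x hx => by
    simp [he, Submodule.projectionOnto_apply_right hcompl.symm ⟨x, hx⟩]
  have hee : e ∘ₗ e = e := by
    ext x
    have hx : e x ∈ p := by
      simp only [he, LinearMap.comp_apply]
      exact (Submodule.projectionOnto p q hcompl.symm x).2
    exact hleft ⟨e x, hx⟩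
  rcases hM.2 e hee with h0 | h1
  · left
    refine ⟨n, hn, ?_⟩
    ext x
    have hx : (φ ^ n) x ∈ p := ⟨x, rfl⟩
    have := hleft ⟨(φ ^ n) x, hx⟩
    rw [h0] at this
    simpa using this.symm
  · right
    have hinj : Injective φ := by
      intro a b hab
      have hab' : φ (a - b) = 0 := by rw [map_sub, hab, sub_self]
      have hker : (φ ^ n) (a - b) = 0 := by
        obtain ⟨m, rfl⟩ := Nat.exists_eq_succ_of_ne_zero hn.ne'
        rw [pow_succ, Module.End.mul_apply, hab', map_zero]
      have := hright (a - b) hker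
      rw [h1] at this
      simpa [sub_eq_zero] using this
    exact IsArtinian.bijective_of_injective_endomorphism φ hinj

end MoreAux


section Helpers
variable {Λ : Type} [Ring Λ] {Y Q Q' X : Type} [AddCommGroup Y] [Module Λ Y]
  [AddCommGroup Q] [Module Λ Q] [AddCommGroup Q'] [Module Λ Q']
  [AddCommGroup X] [Module Λ X]

/-- Corestrict a map landing in `range f` through the injective `f`. -/
noncomputable def corestr (f : Y →ₗ[Λ] Q) (hf : Injective f) (t : Q' →ₗ[Λ] Q)
    (hpres : ∀ q, t q ∈ LinearMap.range f) : Q' →ₗ[Λ] Y :=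
  (LinearEquiv.ofInjective f hf).symm.toLinearMap ∘ₗ t.codRestrict (LinearMap.range f) hpres

lemma corestr_spec (f : Y →ₗ[Λ] Q) (hf : Injective f) (t : Q' →ₗ[Λ] Q)
    (hpres : ∀ q, t q ∈ LinearMap.range f) (q : Q') :
    f (corestr f hf t hpres q) = t q := by
  have key : ∀ z : LinearMap.range f, f ((LinearEquiv.ofInjective f hf).symm z) = z := by
    intro z
    conv_rhs => rw [← (LinearEquiv.ofInjective f hf).apply_symm_apply z]
    rw [LinearEquiv.ofInjective_apply]
  exact key ⟨t q, hpres q⟩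

lemma comm_pow {h : Q →ₗ[Λ] Q} {h' : Y →ₗ[Λ] Y} (f : Y →ₗ[Λ] Q)
    (hc : ∀ y, f (h' y) = h (f y)) : ∀ (m : ℕ) (y : Y), f ((h' ^ m) y) = (h ^ m) (f y) := by
  intro m
  induction m with
  | zero => intro y; simp
  | succ m ih =>
    intro y
    rw [pow_succ, pow_succ, Module.End.mul_apply, Module.End.mul_apply, ih, hc]

lemma pow_bijective {h : Y →ₗ[Λ] Y} (hb : Bijective h) (m : ℕ) : Bijective (h ^ m) := by
  induction m with
  | zero => exact bijective_id
  | succ m ih =>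
    have : ⇑(h ^ (m+1)) = ⇑(h ^ m) ∘ ⇑h := by
      funext y; rw [pow_succ, Module.End.mul_apply]; rfl
    rw [this]; exact ih.comp hb

lemma factor_through (g : Q →ₗ[Λ] X) (hg : Surjective g) (φ : Q →ₗ[Λ] Q')
    (hle : LinearMap.ker g ≤ LinearMap.ker φ) : ∃ s : X →ₗ[Λ] Q', s ∘ₗ g = φ := by
  set e := g.quotKerEquivOfSurjective hg with he
  refine ⟨(LinearMap.ker g).liftQ φ hle ∘ₗ e.symm.toLinearMap, ?_⟩
  ext q
  have h1 : e.symm (g q) = Submodule.Quotient.mk q := by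
    apply e.injective
    rw [e.apply_symm_apply]
    simp [he, LinearMap.quotKerEquivOfSurjective]
  simp only [LinearMap.comp_apply, LinearEquiv.coe_toLinearMap, h1]
  simp

end Helpers

theorem stmt5 (Λ : Type) [Ring Λ] (k : Type) [CommRing k] [IsArtinianRing k] [Algebra k Λ]
    [Module.Finite k Λ]
    (Y Q X : Type) [AddCommGroup Y] [Module Λ Y] [Module.Finite Λ Y]
    [AddCommGroup Q] [Module Λ Q] [Module.Finite Λ Q]
    [AddCommGroup X] [Module Λ X] [Module.Finite Λ X]
    (f : Y →ₗ[Λ] Q) (g : Q →ₗ[Λ] X)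
    (hf : Injective f) (hg : Surjective g)
    (hex : LinearMap.range f = LinearMap.ker g)
    (hns : ¬∃ r : Q →ₗ[Λ] Y, r ∘ₗ f = LinearMap.id)
    (hQ : Module.Projective Λ Q)
    (hY : Indecomposable Λ Y) (hmin : LeftMinimal Λ f) :
    Indecomposable Λ X ∧ RightMinimal Λ g ∧ IsProjCover Λ g := by
  classical
  haveI hart : IsArtinianRing Λ := IsArtinianRing.of_finite k Λ
  haveI : IsArtinian Λ Y := inferInstance
  haveI : IsArtinian Λ Q := inferInstance
  haveI : IsNoetherian Λ Y := artinAlg_noetherian Λ k Y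
  haveI : IsNoetherian Λ Q := artinAlg_noetherian Λ k Q
  -- `f y` is in the kernel of `g`
  have hgf : ∀ y, g (f y) = 0 := fun y => mem_ker.mp (hex ▸ LinearMap.mem_range_self f y)
  ------------------------------------------------------------------
  -- Part 1 : g is right minimal
  ------------------------------------------------------------------
  have hRM : RightMinimal Λ g := by
    intro h hgh
    have hgh' : ∀ q, g (h q) = g q := fun q => LinearMap.congr_fun hgh q
    have hpres : ∀ y, h (f y) ∈ LinearMap.range f := by
      intro y
      rw [hex, mem_ker, hgh', hgf]
    set h' := corestr f hf (h ∘ₗ f) hpres with hh'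
    have hspec : ∀ y, f (h' y) = h (f y) := fun y => corestr_spec f hf (h ∘ₗ f) hpres y
    rcases fitting_dich hY h' with ⟨m, hm, hm0⟩ | hbij
    · exfalso
      have hker : LinearMap.ker g ≤ LinearMap.ker (h ^ m) := by
        rw [← hex]
        rintro _ ⟨y, rfl⟩
        rw [mem_ker]
        have := comm_pow f hspec m y
        rw [hm0] at this
        simpa using this.symm
      obtain ⟨s, hs⟩ := factor_through g hg (h ^ m) hker
      have hs' : ∀ q, s (g q) = (h ^ m) q := fun q => LinearMap.congr_fun hs q
      have hghm : ∀ (j : ℕ) (q : Q), g ((h ^ j) q) = g q := by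
        intro j
        induction j with
        | zero => intro q; simp
        | succ j ih =>
          intro q
          rw [pow_succ, Module.End.mul_apply, ih, hgh']
      have hpres2 : ∀ q : Q, (LinearMap.id - s ∘ₗ g : Q →ₗ[Λ] Q) q ∈ LinearMap.range f := by
        intro q
        rw [hex, mem_ker]
        simp only [LinearMap.sub_apply, LinearMap.id_apply, LinearMap.comp_apply, map_sub]
        rw [hs', hghm]
        simp
      refine hns ⟨corestr f hf _ hpres2, ?_⟩
      ext y
      apply hf
      rw [LinearMap.comp_apply, corestr_spec]
      simp only [LinearMap.sub_apply, LinearMap.id_apply, LinearMap.comp_apply]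
      rw [hgf, map_zero, sub_zero]
    · constructor
      · -- injective
        have hker0 : ∀ q, h q = 0 → q = 0 := by
          intro q hq
          have hq' : q ∈ LinearMap.range f := by
            rw [hex, mem_ker, ← hgh', hq, map_zero]
          obtain ⟨y, rfl⟩ := hq'
          have : f (h' y) = 0 := by rw [hspec, hq]
          have hy : h' y = 0 := hf (by simpa using this)
          have : y = 0 := hbij.1 (by simpa using hy)
          rw [this, map_zero]
        intro a b hab
        have : h (a - b) = 0 := by rw [map_sub, hab, sub_self]
        have := hker0 _ this
        rwa [sub_eq_zero] at this
      · -- surjective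
        intro q
        have hq : q - h q ∈ LinearMap.range f := by
          rw [hex, mem_ker, map_sub, hgh', sub_self]
        obtain ⟨y, hy⟩ := hq
        obtain ⟨y', rfl⟩ := hbij.2 y
        exact ⟨q + f y', by rw [map_add, ← hspec, hy]; abel⟩
  ------------------------------------------------------------------
  -- Part 2 : g is a projective cover
  ------------------------------------------------------------------
  have hPC : IsProjCover Λ g := by
    refine ⟨hQ, hg, ?_⟩
    intro N hN
    have hsurj : Surjective (g ∘ₗ N.subtype) := by
      intro x
      obtain ⟨q, rfl⟩ := hg x
      have hq : q ∈ N ⊔ LinearMap.ker g := hN ▸ Submodule.mem_top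
      obtain ⟨a, ha, b, hb, rfl⟩ := Submodule.mem_sup.mp hq
      exact ⟨⟨a, ha⟩, by simp [mem_ker.mp hb]⟩
    obtain ⟨h₀, hh₀⟩ := Module.projective_lifting_property (g ∘ₗ N.subtype) g hsurj
    have hcomp : g ∘ₗ (N.subtype ∘ₗ h₀) = g := by
      rw [← LinearMap.comp_assoc, hh₀]
    have hbij := hRM _ hcomp
    rw [eq_top_iff]
    intro q _
    obtain ⟨q', hq'⟩ := hbij.2 q
    rw [← hq']
    exact (h₀ q').2
  ------------------------------------------------------------------
  -- Part 3 : X is indecomposable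
  ------------------------------------------------------------------
  have hXne : ∃ x : X, x ≠ 0 := by
    by_contra hc
    push_neg at hc
    apply hns
    have hfs : Surjective f := by
      intro q
      have : q ∈ LinearMap.ker g := by rw [mem_ker]; exact hc _
      rw [← hex] at this; exact this
    have hbijf : Bijective f := ⟨hf, hfs⟩
    refine ⟨(LinearEquiv.ofBijective f hbijf).symm.toLinearMap, ?_⟩
    ext y
    simp only [LinearMap.comp_apply, LinearEquiv.coe_toLinearMap, LinearMap.id_apply]
    exact (LinearEquiv.ofBijective f hbijf).symm_apply_apply y
  -- Key claim
  have key : ∀ e' : X →ₗ[Λ] X, e' ∘ₗ e' = e' → ∀ h : Q →ₗ[Λ] Q, g ∘ₗ h = e' ∘ₗ g →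
      ∀ h' : Y →ₗ[Λ] Y, (∀ y, f (h' y) = h (f y)) → Bijective h' → e' = LinearMap.id := by
    intro e' he' h hgh h' hcomm hbij'
    have hgh' : ∀ q, g (h q) = e' (g q) := fun q => LinearMap.congr_fun hgh q
    have he'' : ∀ x, e' (e' x) = e' x := fun x => LinearMap.congr_fun he' x
    have hpow : ∀ j : ℕ, ∀ q, g ((h ^ (j+1)) q) = e' (g q) := by
      intro j
      induction j with
      | zero => intro q; rw [pow_one]; exact hgh' q
      | succ j ih =>
        intro q
        rw [pow_succ, Module.End.mul_apply, ih, hgh', he'']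
    obtain ⟨n, hn, hcompl⟩ : ∃ n, 0 < n ∧ IsCompl (ker (h ^ n)) (range (h ^ n)) := by
      obtain ⟨m, hm⟩ := Filter.eventually_atTop.mp (h.eventually_isCompl_ker_pow_range_pow)
      exact ⟨m + 1, Nat.succ_pos m, hm (m+1) (Nat.le_succ m)⟩
    have hrange : ∀ y, f y ∈ LinearMap.range (h ^ n) := by
      intro y
      obtain ⟨y', rfl⟩ := (pow_bijective hbij' n).2 y
      exact ⟨f y', (comm_pow f hcomm n y').symm⟩
    set π : Q →ₗ[Λ] Q := (LinearMap.range (h ^ n)).subtype ∘ₗ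
      Submodule.projectionOnto _ _ hcompl.symm with hπ
    have hπf : π ∘ₗ f = f := by
      ext y
      have : ((⟨f y, hrange y⟩ : LinearMap.range (h ^ n)) : Q) = f y := rfl
      simp only [LinearMap.comp_apply, hπ]
      rw [← this, Submodule.projectionOnto_apply_left]
      rfl
    have hπbij := hmin π hπf
    have hker0 : ∀ q, (h ^ n) q = 0 → q = 0 := by
      intro q hq
      have hqk : q ∈ LinearMap.ker (h ^ n) := mem_ker.mpr hq
      have : π q = 0 := by
        simp only [hπ, LinearMap.comp_apply]
        rw [Submodule.projectionOnto_apply_right hcompl.symm ⟨q, hqk⟩]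
        simp
      exact hπbij.1 (by rw [this, map_zero])
    have hinj : Injective (h ^ n) := by
      intro a b hab
      have : (h ^ n) (a - b) = 0 := by rw [map_sub, hab, sub_self]
      have := hker0 _ this
      rwa [sub_eq_zero] at this
    have hsurj : Surjective (h ^ n) := IsArtinian.surjective_of_injective_endomorphism _ hinj
    have hes : Surjective e' := by
      intro x
      obtain ⟨q, rfl⟩ := hg x
      obtain ⟨q', hq'⟩ := hsurj q
      obtain ⟨n', hn'⟩ := Nat.exists_eq_succ_of_ne_zero hn.ne'
      have h1 : g ((h ^ n) q') = e' (g q') := by rw [hn']; exact hpow n' q'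
      rw [hq'] at h1
      exact ⟨g q', h1.symm⟩
    ext x
    obtain ⟨x', rfl⟩ := hes x
    rw [LinearMap.id_apply, he'']
  refine ⟨⟨hXne, ?_⟩, hRM, hPC⟩
  intro e he
  obtain ⟨h, hh⟩ := Module.projective_lifting_property g (e ∘ₗ g) hg
  have hh' : ∀ q, g (h q) = e (g q) := fun q => LinearMap.congr_fun hh q
  have hpres : ∀ y, h (f y) ∈ LinearMap.range f := by
    intro y
    rw [hex, mem_ker, hh', hgf, map_zero]
  set h' := corestr f hf (h ∘ₗ f) hpres with hh''
  have hspec : ∀ y, f (h' y) = h (f y) := fun y => corestr_spec f hf (h ∘ₗ f) hpres y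
  rcases fitting_dich hY h' with ⟨m, hm, h0⟩ | hbij
  · -- h' nilpotent : then id - h' is bijective, and we show e = 0
    left
    have hnil : IsNilpotent (h' : Module.End Λ Y) := ⟨m, h0⟩
    have hunit := hnil.isUnit_one_sub
    rw [Module.End.isUnit_iff] at hunit
    have hbij2 : Bijective (LinearMap.id - h' : Y →ₗ[Λ] Y) := hunit
    have hidem : (LinearMap.id - e) ∘ₗ (LinearMap.id - e) = LinearMap.id - e := by
      ext x
      simp only [LinearMap.comp_apply, LinearMap.sub_apply, LinearMap.id_apply, map_sub]
      have := LinearMap.congr_fun he x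
      simp only [LinearMap.comp_apply] at this
      rw [this]
      abel
    have hlift : g ∘ₗ (LinearMap.id - h) = (LinearMap.id - e) ∘ₗ g := by
      ext q
      simp only [LinearMap.comp_apply, LinearMap.sub_apply, LinearMap.id_apply, map_sub, hh']
    have hcomm2 : ∀ y, f ((LinearMap.id - h' : Y →ₗ[Λ] Y) y) = (LinearMap.id - h : Q →ₗ[Λ] Q) (f y) := by
      intro y
      simp only [LinearMap.sub_apply, LinearMap.id_apply, map_sub, hspec]
    have := key (LinearMap.id - e) hidem (LinearMap.id - h) hlift (LinearMap.id - h') hcomm2 hbij2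
    rwa [sub_eq_self] at this
  · right
    exact key e he h hh h' hspec hbij
end

section
/- Let 0 → Y → Q → X → 0 be a non-split short exact sequence over an artin algebra Λ with Q projective-injective. Then the following are equivalent: (1) X is indecomposable and Q → X is a projective cover; (2) Y is indecomposable and Y → Q is an injective envelope. -/
open Function LinearMap

section MyAux

lemma myNilpotentNilradical {k : Type} [CommRing k] [IsArtinianRing k] :
    IsNilpotent (nilradical k) := by
  have hjac : nilradical k = (⊥ : Ideal k).jacobson := by
    rw [nilradical_eq_sInf, Ideal.jacobson]
    congr 1
    ext I
    simp [IsArtinianRing.isPrime_iff_isMaximal, bot_le]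
  rw [hjac]
  exact IsArtinianRing.isNilpotent_jacobson_bot

lemma myNoethOfTorsion {k : Type} [CommRing k] [IsArtinianRing k]
    {M : Type} [AddCommGroup M] [Module k M] [IsArtinian k M]
    (h : Module.IsTorsionBySet k M (nilradical k : Set k)) : IsNoetherian k M := by
  letI : Module (k ⧸ nilradical k) M := h.module
  haveI : IsScalarTower k (k ⧸ nilradical k) M := h.isScalarTower
  haveI : IsArtinian (k ⧸ nilradical k) M := isArtinian_of_tower k inferInstance
  haveI : IsReduced (k ⧸ nilradical k) :=
    (Ideal.isRadical_iff_quotient_reduced _).mp (Ideal.radical_isRadical (0 : Ideal k))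
  haveI : IsSemisimpleRing (k ⧸ nilradical k) :=
    IsArtinianRing.isSemisimpleRing_of_isReduced (k ⧸ nilradical k)
  haveI : IsNoetherian (k ⧸ nilradical k) M := by
    have htfae := (IsSemisimpleModule.finite_tfae (R := k ⧸ nilradical k) (M := M)).out 2 1
    exact htfae.mp ‹_›
  let F : Submodule k M → Submodule (k ⧸ nilradical k) M := fun N =>
    { carrier := N
      add_mem' := fun ha hb => N.add_mem ha hb
      zero_mem' := N.zero_mem
      smul_mem' := by
        intro c x hx
        obtain ⟨a, rfl⟩ := Ideal.Quotient.mk_surjective c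
        have hsm : (Ideal.Quotient.mk (nilradical k) a) • x = a • x := h.mk_smul a x
        rw [hsm]
        exact N.smul_mem a hx }
  have hFlt : ∀ {N1 N2 : Submodule k M}, F N1 < F N2 ↔ N1 < N2 := by
    intro N1 N2
    constructor
    · intro hN
      refine lt_of_le_of_ne (fun x hx => hN.le hx) ?_
      rintro rfl; exact lt_irrefl _ hN
    · intro hN
      refine lt_of_le_of_ne (fun x hx => hN.le hx) ?_
      intro hEq
      apply hN.ne
      apply SetLike.coe_injective
      have h2 : ((F N1 : Set M)) = (F N2 : Set M) :=
        congrArg (fun S : Submodule (k ⧸ nilradical k) M => (S : Set M)) hEq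
      exact h2
  have hFinj : Function.Injective F := by
    intro N1 N2 hEq
    apply SetLike.coe_injective
    have h2 : ((F N1 : Set M)) = (F N2 : Set M) :=
      congrArg (fun S : Submodule (k ⧸ nilradical k) M => (S : Set M)) hEq
    exact h2
  refine isNoetherian_mk ⟨RelEmbedding.wellFounded
    (⟨⟨F, hFinj⟩, fun {a b} => hFlt⟩ :
      ((· > ·) : Submodule k M → Submodule k M → Prop) ↪r
      ((· > ·) : Submodule (k ⧸ nilradical k) M → Submodule (k ⧸ nilradical k) M → Prop))
    (IsNoetherian.wf inferInstance)⟩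

lemma myHopkinsAux {k : Type} [CommRing k] [IsArtinianRing k] :
    ∀ (m : ℕ) (M : Type) (_ : AddCommGroup M) (_ : Module k M)
    (_ : IsArtinian k M), (nilradical k) ^ m • (⊤ : Submodule k M) = ⊥ → IsNoetherian k M := by
  intro m
  induction m with
  | zero =>
    intro M _ _ _ hM
    rw [pow_zero, Ideal.one_eq_top, Submodule.top_smul] at hM
    haveI : Subsingleton M := by
      constructor
      intro a b
      have ha : a ∈ (⊥ : Submodule k M) := hM ▸ Submodule.mem_top
      have hb : b ∈ (⊥ : Submodule k M) := hM ▸ Submodule.mem_top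
      rw [Submodule.mem_bot] at ha hb
      rw [ha, hb]
    infer_instance
  | succ m ih =>
    intro M _ _ _ hM
    haveI : IsNoetherian k ↥(nilradical k • (⊤ : Submodule k M)) := by
      apply ih _ inferInstance inferInstance inferInstance
      have h2 : nilradical k ^ m • (nilradical k • (⊤ : Submodule k M)) = ⊥ := by
        rw [← Submodule.smul_assoc, Ideal.smul_eq_mul, ← pow_succ, hM]
      have h1 : Submodule.map (nilradical k • (⊤ : Submodule k M)).subtype
          (nilradical k ^ m • (⊤ : Submodule k ↥(nilradical k • (⊤ : Submodule k M)))) = ⊥ := by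
        rw [Submodule.map_smul'', Submodule.map_top, Submodule.range_subtype, h2]
      rw [eq_bot_iff]
      intro x hx
      have h3 : (nilradical k • (⊤ : Submodule k M)).subtype x ∈ (⊥ : Submodule k M) :=
        h1 ▸ Submodule.mem_map_of_mem hx
      rw [Submodule.mem_bot] at h3 ⊢
      exact Subtype.ext h3
    haveI : IsNoetherian k (M ⧸ nilradical k • (⊤ : Submodule k M)) :=
      myNoethOfTorsion (Module.isTorsionBySet_quotient_ideal_smul M (nilradical k))
    exact (isNoetherian_iff_submodule_quotient (nilradical k • (⊤ : Submodule k M))).mpr ⟨‹_›, ‹_›⟩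

lemma myHopkins {k : Type} [CommRing k] [IsArtinianRing k] : IsNoetherianRing k := by
  obtain ⟨n, hn⟩ := (myNilpotentNilradical (k := k))
  exact myHopkinsAux n k inferInstance inferInstance inferInstance
    (by rw [hn, Submodule.zero_eq_bot]; exact Submodule.bot_smul ⊤)

variable {R : Type} [Ring R]

lemma myFitting {M : Type} [AddCommGroup M] [Module R M] [IsArtinian R M] [IsNoetherian R M]
    (hM : Indecomposable R M) (φ : M →ₗ[R] M) :
    Function.Bijective φ ∨ IsNilpotent φ := by
  obtain ⟨n, hn⟩ := Filter.eventually_atTop.mp (LinearMap.eventually_isCompl_ker_pow_range_pow φ)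
  have h := hn (n + 1) (Nat.le_succ n)
  set p := LinearMap.ker (φ ^ (n + 1)) with hp
  set q := LinearMap.range (φ ^ (n + 1)) with hq
  let e : M →ₗ[R] M := p.subtype ∘ₗ p.linearProjOfIsCompl q h
  have he : e ∘ₗ e = e := by
    ext x
    show (p.subtype (p.linearProjOfIsCompl q h (p.subtype (p.linearProjOfIsCompl q h x)))) = _
    simp only [Submodule.subtype_apply, Submodule.linearProjOfIsCompl_apply_left h]
    exact congrArg Subtype.val (Submodule.projectionOnto_apply_left h _)
  rcases hM.2 e he with h0 | hid
  · left
    have hinj : Function.Injective φ := by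
      have hker : ∀ x ∈ p, x = (0 : M) := by
        intro x hx
        have hex : e x = x := by
          show (p.subtype (p.linearProjOfIsCompl q h x)) = x
          have hpl := Submodule.linearProjOfIsCompl_apply_left h (⟨x, hx⟩ : p)
          rw [Submodule.subtype_apply]
          rw [show (p.linearProjOfIsCompl q h) x = ⟨x, hx⟩ from hpl]
        rw [h0] at hex
        simpa using hex.symm
      intro a b hab
      have hmem : a - b ∈ p := by
        rw [hp, LinearMap.mem_ker, pow_succ, Module.End.mul_apply]
        rw [map_sub, hab, sub_self, map_zero]
      exact sub_eq_zero.mp (hker _ hmem)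
    exact ⟨hinj, IsArtinian.surjective_of_injective_endomorphism φ hinj⟩
  · right
    refine ⟨n + 1, ?_⟩
    ext x
    have hx : (φ ^ (n + 1)) x ∈ q := LinearMap.mem_range_self _ x
    have h2 : (φ ^ (n + 1)) x = e ((φ ^ (n + 1)) x) := by rw [hid]; rfl
    rw [h2]
    show p.subtype (p.linearProjOfIsCompl q h ((φ ^ (n + 1)) x)) = (0 : M →ₗ[R] M) x
    rw [show p.linearProjOfIsCompl q h ((φ ^ (n + 1)) x) = 0 from
      Submodule.projectionOnto_apply_of_mem_right h hx, map_zero, LinearMap.zero_apply]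

lemma myFactorSurj {A B C : Type} [AddCommGroup A] [Module R A] [AddCommGroup B] [Module R B]
    [AddCommGroup C] [Module R C] (g : A →ₗ[R] B) (hg : Surjective g) (h : A →ₗ[R] C)
    (hle : LinearMap.ker g ≤ LinearMap.ker h) : ∃ ψ : B →ₗ[R] C, ψ ∘ₗ g = h := by
  refine ⟨(LinearMap.ker g).liftQ h hle ∘ₗ
    (LinearMap.quotKerEquivOfSurjective g hg).symm.toLinearMap, ?_⟩
  ext x
  have hmk : (LinearMap.quotKerEquivOfSurjective g hg).symm (g x) =
      Submodule.Quotient.mk x := by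
    apply (LinearMap.quotKerEquivOfSurjective g hg).injective
    rw [LinearEquiv.apply_symm_apply]
    simp [LinearMap.quotKerEquivOfSurjective, LinearMap.quotKerEquivRange_apply_mk]
  simp only [LinearMap.comp_apply, LinearEquiv.coe_coe, hmk, Submodule.liftQ_apply]

lemma myFactorInj {W Y Q : Type} [AddCommGroup W] [Module R W] [AddCommGroup Y] [Module R Y]
    [AddCommGroup Q] [Module R Q] (f : Y →ₗ[R] Q) (hf : Injective f) (h : W →ₗ[R] Q)
    (hle : LinearMap.range h ≤ LinearMap.range f) : ∃ s : W →ₗ[R] Y, f ∘ₗ s = h := by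
  let e := LinearEquiv.ofInjective f hf
  have key : ∀ z : LinearMap.range f, f (e.symm z) = (z : Q) := by
    intro z
    have h1 : ((e (e.symm z)) : Q) = (z : Q) := by rw [e.apply_symm_apply]
    rw [← h1, LinearEquiv.ofInjective_apply]
  refine ⟨e.symm.toLinearMap ∘ₗ h.codRestrict (LinearMap.range f)
    (fun w => hle (LinearMap.mem_range_self h w)), ?_⟩
  ext w
  simp only [LinearMap.comp_apply, LinearEquiv.coe_coe]
  rw [key]
  rfl

lemma myPowComm {A B : Type} [AddCommGroup A] [Module R A] [AddCommGroup B] [Module R B]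
    (a : B →ₗ[R] B) (b : A →ₗ[R] A) (g : A →ₗ[R] B) (hc : a ∘ₗ g = g ∘ₗ b) (n : ℕ) :
    (a ^ n) ∘ₗ g = g ∘ₗ (b ^ n) := by
  induction n with
  | zero => simp [Module.End.one_eq_id]
  | succ n ih =>
    rw [pow_succ', pow_succ', Module.End.mul_eq_comp, Module.End.mul_eq_comp,
      LinearMap.comp_assoc, ih, ← LinearMap.comp_assoc, hc, LinearMap.comp_assoc]

lemma myRetraction {Y Q X : Type} [AddCommGroup Y] [Module R Y] [AddCommGroup Q] [Module R Q]
    [AddCommGroup X] [Module R X] (f : Y →ₗ[R] Q) (g : Q →ₗ[R] X) (hf : Injective f)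
    (hex : LinearMap.range f = LinearMap.ker g) (s : X →ₗ[R] Q)
    (hs : g ∘ₗ s = LinearMap.id) : ∃ r : Q →ₗ[R] Y, r ∘ₗ f = LinearMap.id := by
  have hle : LinearMap.range (LinearMap.id - s ∘ₗ g) ≤ LinearMap.range f := by
    rw [hex]
    rintro q ⟨x, rfl⟩
    rw [LinearMap.mem_ker]
    have h1 : g (s (g x)) = g x := congrArg (fun t => t (g x)) hs
    simp [h1]
  obtain ⟨r, hr⟩ := myFactorInj f hf _ hle
  refine ⟨r, ?_⟩
  have h2 : f ∘ₗ (r ∘ₗ f) = f ∘ₗ LinearMap.id := by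
    rw [← LinearMap.comp_assoc, hr]
    ext y
    have hy : g (f y) = 0 := by
      have hy2 : f y ∈ LinearMap.ker g := hex ▸ LinearMap.mem_range_self f y
      exact hy2
    simp [hy]
  ext y
  exact hf (congrArg (fun t => t y) h2)

end MyAux
theorem stmt6 (Λ : Type) [Ring Λ] (k : Type) [CommRing k] [IsArtinianRing k] [Algebra k Λ]
    [Module.Finite k Λ]
    (Y Q X : Type) [AddCommGroup Y] [Module Λ Y] [Module.Finite Λ Y]
    [AddCommGroup Q] [Module Λ Q] [Module.Finite Λ Q]
    [AddCommGroup X] [Module Λ X] [Module.Finite Λ X]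
    (f : Y →ₗ[Λ] Q) (g : Q →ₗ[Λ] X)
    (hf : Injective f) (hg : Surjective g)
    (hex : LinearMap.range f = LinearMap.ker g)
    (hns : ¬∃ r : Q →ₗ[Λ] Y, r ∘ₗ f = LinearMap.id)
    (hQ : IsProjInj Λ Q) :
    (Indecomposable Λ X ∧ IsProjCover Λ g) ↔ (Indecomposable Λ Y ∧ IsInjEnv Λ f) := by
  obtain ⟨hQproj, hQinj⟩ := hQ
  haveI : IsArtinianRing Λ :=
    isArtinian_of_tower k (isArtinian_of_fg_of_artinian' (R := k) (M := Λ))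
  haveI : IsNoetherianRing k := myHopkins
  haveI : IsNoetherianRing Λ :=
    isNoetherian_of_tower k (isNoetherian_of_isNoetherianRing_of_finite k Λ)
  haveI : IsArtinian Λ Q := isArtinian_of_fg_of_artinian'
  haveI : IsArtinian Λ X := isArtinian_of_fg_of_artinian'
  haveI : IsArtinian Λ Y := isArtinian_of_fg_of_artinian'
  haveI : IsNoetherian Λ Q := isNoetherian_of_isNoetherianRing_of_finite Λ Q
  haveI : IsNoetherian Λ X := isNoetherian_of_isNoetherianRing_of_finite Λ X
  haveI : IsNoetherian Λ Y := isNoetherian_of_isNoetherianRing_of_finite Λ Y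
  have hgf : ∀ y, g (f y) = 0 := by
    intro y
    have h1 : f y ∈ LinearMap.ker g := hex ▸ LinearMap.mem_range_self f y
    exact h1
  have hY0 : ∃ y : Y, y ≠ 0 := by
    by_contra hc
    push_neg at hc
    exact hns ⟨0, by ext y; simpa using (hc y).symm⟩
  have hX0 : ∃ x : X, x ≠ 0 := by
    by_contra hc
    push_neg at hc
    have hfs : Surjective f := by
      rw [← LinearMap.range_eq_top, hex]
      rw [eq_top_iff]
      intro q _
      rw [LinearMap.mem_ker]
      exact hc (g q)
    have hbij : Bijective f := ⟨hf, hfs⟩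
    refine hns ⟨(LinearEquiv.ofBijective f hbij).symm.toLinearMap, ?_⟩
    ext y
    show (LinearEquiv.ofBijective f hbij).symm (f y) = y
    have h1 : (LinearEquiv.ofBijective f hbij) y = f y := rfl
    rw [← h1, LinearEquiv.symm_apply_apply]
  have hkerle : ∀ (φ : Q →ₗ[Λ] Q) (eY : Y →ₗ[Λ] Y), φ ∘ₗ f = f ∘ₗ eY →
      LinearMap.ker g ≤ LinearMap.ker (g ∘ₗ φ) := by
    intro φ eY hφ q hq
    have hq' : q ∈ LinearMap.range f := hex ▸ hq
    obtain ⟨y, rfl⟩ := hq'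
    have h1 : φ (f y) = f (eY y) := congrArg (fun t => t y) hφ
    rw [LinearMap.mem_ker, LinearMap.comp_apply, h1, hgf]
  have hrangele : ∀ (et : Q →ₗ[Λ] Q) (eb : X →ₗ[Λ] X), g ∘ₗ et = eb ∘ₗ g →
      LinearMap.range (et ∘ₗ f) ≤ LinearMap.range f := by
    intro et eb het
    rw [hex]
    rintro q ⟨y, rfl⟩
    rw [LinearMap.mem_ker]
    have h1 : g (et (f y)) = eb (g (f y)) := congrArg (fun t => t (f y)) het
    rw [LinearMap.comp_apply, h1, hgf, map_zero]
  constructor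
  · rintro ⟨hXind, _, _, hsup⟩
    have hB : ∀ (φ : Q →ₗ[Λ] Q) (ψ : X →ₗ[Λ] X), ψ ∘ₗ g = g ∘ₗ φ → Surjective ψ →
        Bijective φ := by
      intro φ ψ hψ hψs
      have hsup' : LinearMap.range φ ⊔ LinearMap.ker g = ⊤ := by
        rw [eq_top_iff]
        intro q _
        obtain ⟨x, hx⟩ := hψs (g q)
        obtain ⟨q', rfl⟩ := hg x
        have h1 : g (φ q') = g q := by
          have h2 : ψ (g q') = g (φ q') := congrArg (fun t => t q') hψ
          rw [← h2, hx]
        refine Submodule.mem_sup.mpr ⟨φ q', LinearMap.mem_range_self φ q', q - φ q', ?_, by abel⟩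
        rw [LinearMap.mem_ker, map_sub, h1, sub_self]
      have hsurj : Surjective φ := LinearMap.range_eq_top.mp (hsup _ hsup')
      exact ⟨IsNoetherian.injective_of_surjective_endomorphism φ hsurj, hsurj⟩
    have hess : ∀ N : Submodule Λ Q, N ⊓ LinearMap.range f = ⊥ → N = ⊥ := by
      intro N hN
      have hinj2 : Injective (N.mkQ ∘ₗ f) := by
        rw [← LinearMap.ker_eq_bot, eq_bot_iff]
        intro y hy
        have hy' : N.mkQ (f y) = 0 := hy
        rw [Submodule.mkQ_apply, Submodule.Quotient.mk_eq_zero] at hy'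
        have h2 : f y ∈ N ⊓ LinearMap.range f := ⟨hy', LinearMap.mem_range_self f y⟩
        rw [hN, Submodule.mem_bot] at h2
        rw [Submodule.mem_bot]
        apply hf
        rw [h2, map_zero]
      obtain ⟨h', hh'⟩ := hQinj.out (N.mkQ ∘ₗ f) hinj2 f
      have hφf : (h' ∘ₗ N.mkQ) ∘ₗ f = f ∘ₗ LinearMap.id := by
        ext y
        simpa using hh' y
      obtain ⟨ψ, hψ⟩ := myFactorSurj g hg (g ∘ₗ (h' ∘ₗ N.mkQ)) (hkerle _ _ hφf)
      rcases myFitting hXind ψ with hbij | ⟨m, hm⟩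
      · have hφbij : Bijective (h' ∘ₗ N.mkQ) := hB _ ψ hψ hbij.2
        rw [eq_bot_iff]
        intro x hx
        rw [Submodule.mem_bot]
        apply hφbij.1
        rw [map_zero]
        show h' (N.mkQ x) = 0
        rw [show N.mkQ x = 0 from by
          rw [Submodule.mkQ_apply, Submodule.Quotient.mk_eq_zero]; exact hx]
        rw [map_zero]
      · exfalso
        have hm1 : ψ ^ (m + 1) = 0 := by rw [pow_succ, hm, zero_mul]
        have hpow := myPowComm ψ (h' ∘ₗ N.mkQ) g hψ (m + 1)
        have hg0 : g ∘ₗ ((h' ∘ₗ N.mkQ) ^ (m + 1) : Q →ₗ[Λ] Q) = 0 := by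
          rw [← hpow, hm1, LinearMap.zero_comp]
        have hle2 : LinearMap.range ((h' ∘ₗ N.mkQ) ^ (m + 1) : Q →ₗ[Λ] Q) ≤
            LinearMap.range f := by
          rw [hex]
          rintro q ⟨q', rfl⟩
          rw [LinearMap.mem_ker]
          exact congrArg (fun t => t q') hg0
        obtain ⟨s, hs⟩ := myFactorInj f hf _ hle2
        have hφn : ((h' ∘ₗ N.mkQ) ^ (m + 1) : Q →ₗ[Λ] Q) ∘ₗ f = f := by
          have h3 := myPowComm (h' ∘ₗ N.mkQ) LinearMap.id f hφf (m + 1)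
          rw [h3]
          have hid : (LinearMap.id ^ (m + 1) : Y →ₗ[Λ] Y) = LinearMap.id := by
            rw [← Module.End.one_eq_id, one_pow]
          rw [hid, LinearMap.comp_id]
        apply hns
        refine ⟨s, ?_⟩
        have h2 : f ∘ₗ (s ∘ₗ f) = f ∘ₗ LinearMap.id := by
          rw [← LinearMap.comp_assoc, hs, hφn, LinearMap.comp_id]
        ext y
        exact hf (congrArg (fun t => t y) h2)
    have hYind : Indecomposable Λ Y := by
      refine ⟨hY0, ?_⟩
      have key : ∀ (e : Y →ₗ[Λ] Y) (et : Q →ₗ[Λ] Q) (eb : X →ₗ[Λ] X),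
          e ∘ₗ e = e → et ∘ₗ f = f ∘ₗ e → eb ∘ₗ g = g ∘ₗ et → Surjective eb →
          e = LinearMap.id := by
        intro e et eb hee hetf hebg hebs
        have hetbij : Bijective et := hB et eb hebg hebs
        ext y
        have h2 : et (f (y - e y)) = f (e (y - e y)) := congrArg (fun t => t (y - e y)) hetf
        have h3 : e (y - e y) = 0 := by
          have h4 : e (e y) = e y := congrArg (fun t => t y) hee
          rw [map_sub, h4, sub_self]
        have h1 : et (f (y - e y)) = 0 := by rw [h2, h3, map_zero]
        have h4 : f (y - e y) = 0 := by
          apply hetbij.1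
          rw [h1, map_zero]
        have h5 : y - e y = 0 := by
          apply hf
          rw [h4, map_zero]
        show e y = y
        exact (sub_eq_zero.mp h5).symm
      intro e hee
      obtain ⟨et, het⟩ := hQinj.out f hf (f ∘ₗ e)
      have hetf : et ∘ₗ f = f ∘ₗ e := by
        ext y
        simpa using het y
      obtain ⟨eb, heb⟩ := myFactorSurj g hg (g ∘ₗ et) (hkerle et e hetf)
      rcases myFitting hXind eb with hbij | hnil
      · right; exact key e et eb hee hetf heb hbij.2
      · left
        have hunit : IsUnit (1 - eb) := IsNilpotent.isUnit_one_sub hnil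
        have hbij2 : Bijective (LinearMap.id - eb : X →ₗ[Λ] X) := by
          have h4 := (Module.End.isUnit_iff (1 - eb)).mp hunit
          have h5 : (1 - eb : X →ₗ[Λ] X) = LinearMap.id - eb := by rw [Module.End.one_eq_id]
          rwa [h5] at h4
        have hkey := key (LinearMap.id - e) (LinearMap.id - et) (LinearMap.id - eb)
          (by
            ext y
            have h6 : e (e y) = e y := congrArg (fun t => t y) hee
            simp only [LinearMap.comp_apply, LinearMap.sub_apply, LinearMap.id_apply,
              map_sub, h6]
            abel)
          (by
            ext y
            have h6 : et (f y) = f (e y) := congrArg (fun t => t y) hetf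
            simp only [LinearMap.comp_apply, LinearMap.sub_apply, LinearMap.id_apply,
              map_sub, h6])
          (by
            ext q
            have h6 : eb (g q) = g (et q) := congrArg (fun t => t q) heb
            simp only [LinearMap.comp_apply, LinearMap.sub_apply, LinearMap.id_apply,
              map_sub, h6])
          hbij2.2
        ext y
        have h7 := congrArg (fun t => t y) hkey
        simp only [LinearMap.sub_apply, LinearMap.id_apply] at h7
        simpa using sub_eq_self.mp h7
    exact ⟨hYind, hQinj, hf, hess⟩
  · rintro ⟨hYind, _, _, hess⟩
    have hsup : ∀ N : Submodule Λ Q, N ⊔ LinearMap.ker g = ⊤ → N = ⊤ := by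
      intro N hN
      have hsub : Surjective (g ∘ₗ N.subtype) := by
        intro x
        obtain ⟨q, rfl⟩ := hg x
        have hq : q ∈ N ⊔ LinearMap.ker g := by rw [hN]; exact Submodule.mem_top
        obtain ⟨a, ha, b, hb, rfl⟩ := Submodule.mem_sup.mp hq
        refine ⟨⟨a, ha⟩, ?_⟩
        have hb0 : g b = 0 := hb
        simp [hb0]
      haveI := hQproj
      obtain ⟨h', hh'⟩ := Module.projective_lifting_property (g ∘ₗ N.subtype) g hsub
      have hφ : g ∘ₗ (N.subtype ∘ₗ h') = g := by
        rw [← LinearMap.comp_assoc]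
        exact hh'
      have hle1 : LinearMap.range ((N.subtype ∘ₗ h') ∘ₗ f) ≤ LinearMap.range f := by
        rw [hex]
        rintro q ⟨y, rfl⟩
        rw [LinearMap.mem_ker]
        have h1 : g ((N.subtype ∘ₗ h') (f y)) = g (f y) := congrArg (fun t => t (f y)) hφ
        rw [LinearMap.comp_apply, h1, hgf]
      obtain ⟨e, he⟩ := myFactorInj f hf ((N.subtype ∘ₗ h') ∘ₗ f) hle1
      rcases myFitting hYind e with hbij | ⟨m, hm⟩
      · have hker : LinearMap.ker (N.subtype ∘ₗ h') ⊓ LinearMap.range f = ⊥ := by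
          rw [eq_bot_iff]
          rintro q ⟨hq1, y, rfl⟩
          rw [Submodule.mem_bot]
          have h1 : f (e y) = (N.subtype ∘ₗ h') (f y) := congrArg (fun t => t y) he
          have h2 : (N.subtype ∘ₗ h') (f y) = 0 := hq1
          have h3 : e y = 0 := hf (by rw [h1, h2, map_zero])
          have h4 : y = 0 := hbij.1 (by rw [h3, map_zero])
          rw [h4, map_zero]
        have hφinj : Injective (N.subtype ∘ₗ h') := LinearMap.ker_eq_bot.mp (hess _ hker)
        have hφsurj : Surjective (N.subtype ∘ₗ h') :=
          IsArtinian.surjective_of_injective_endomorphism _ hφinj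
        rw [eq_top_iff]
        intro q _
        obtain ⟨q', rfl⟩ := hφsurj q
        have h5 : (N.subtype ∘ₗ h') q' = ((h' q' : N) : Q) := rfl
        rw [h5]
        exact SetLike.coe_mem _
      · exfalso
        have hm1 : (e ^ (m + 1) : Y →ₗ[Λ] Y) = 0 := by rw [pow_succ, hm, zero_mul]
        have hpow := myPowComm (N.subtype ∘ₗ h') e f he.symm (m + 1)
        have hker2 : LinearMap.ker g ≤
            LinearMap.ker ((N.subtype ∘ₗ h') ^ (m + 1) : Q →ₗ[Λ] Q) := by
          intro q hq
          have hq' : q ∈ LinearMap.range f := hex ▸ hq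
          obtain ⟨y, rfl⟩ := hq'
          rw [LinearMap.mem_ker]
          have h1 : ((N.subtype ∘ₗ h') ^ (m + 1) : Q →ₗ[Λ] Q) (f y) =
              f ((e ^ (m + 1) : Y →ₗ[Λ] Y) y) := congrArg (fun t => t y) hpow
          rw [h1, hm1, LinearMap.zero_apply, map_zero]
        obtain ⟨s, hs⟩ := myFactorSurj g hg
          ((N.subtype ∘ₗ h') ^ (m + 1) : Q →ₗ[Λ] Q) hker2
        have hgφ : g ∘ₗ ((N.subtype ∘ₗ h') ^ (m + 1) : Q →ₗ[Λ] Q) = g := by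
          have h2 := myPowComm LinearMap.id (N.subtype ∘ₗ h') g
            (by rw [LinearMap.id_comp]; exact hφ.symm) (m + 1)
          rw [← h2]
          have hid : (LinearMap.id ^ (m + 1) : X →ₗ[Λ] X) = LinearMap.id := by
            rw [← Module.End.one_eq_id, one_pow]
          rw [hid, LinearMap.id_comp]
        have hsec : g ∘ₗ s = LinearMap.id := by
          have h3 : (g ∘ₗ s) ∘ₗ g = LinearMap.id ∘ₗ g := by
            rw [LinearMap.comp_assoc, hs, hgφ, LinearMap.id_comp]
          ext x
          obtain ⟨q, rfl⟩ := hg x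
          exact congrArg (fun t => t q) h3
        obtain ⟨r, hr⟩ := myRetraction f g hf hex s hsec
        exact hns ⟨r, hr⟩
    have hXind : Indecomposable Λ X := by
      refine ⟨hX0, ?_⟩
      have key2 : ∀ (eb : X →ₗ[Λ] X) (et : Q →ₗ[Λ] Q) (e : Y →ₗ[Λ] Y),
          eb ∘ₗ eb = eb → g ∘ₗ et = eb ∘ₗ g → f ∘ₗ e = et ∘ₗ f → Bijective e →
          eb = LinearMap.id := by
        intro eb et e hebeb het he hebij
        have hker : LinearMap.ker et ⊓ LinearMap.range f = ⊥ := by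
          rw [eq_bot_iff]
          rintro q ⟨hq1, y, rfl⟩
          rw [Submodule.mem_bot]
          have h1 : f (e y) = et (f y) := congrArg (fun t => t y) he
          have hq1' : et (f y) = 0 := hq1
          have h3 : e y = 0 := hf (by rw [h1, hq1', map_zero])
          have h4 : y = 0 := hebij.1 (by rw [h3, map_zero])
          rw [h4, map_zero]
        have hinj : Injective et := LinearMap.ker_eq_bot.mp (hess _ hker)
        have hsurj : Surjective et := IsArtinian.surjective_of_injective_endomorphism et hinj
        ext x
        obtain ⟨q, rfl⟩ := hg x
        obtain ⟨q', rfl⟩ := hsurj q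
        have h1 : g (et q') = eb (g q') := congrArg (fun t => t q') het
        have h2 : eb (eb (g q')) = eb (g q') := congrArg (fun t => t (g q')) hebeb
        show eb (g (et q')) = g (et q')
        rw [h1, h2, ← h1]
      intro eb hebeb
      haveI := hQproj
      obtain ⟨et, het'⟩ := Module.projective_lifting_property g (eb ∘ₗ g) hg
      obtain ⟨e, he⟩ := myFactorInj f hf (et ∘ₗ f) (hrangele et eb het')
      rcases myFitting hYind e with hbij | hnil
      · right; exact key2 eb et e hebeb het' he hbij
      · left
        have hunit : IsUnit (1 - e) := IsNilpotent.isUnit_one_sub hnil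
        have hbij2 : Bijective (LinearMap.id - e : Y →ₗ[Λ] Y) := by
          have h4 := (Module.End.isUnit_iff (1 - e)).mp hunit
          have h5 : (1 - e : Y →ₗ[Λ] Y) = LinearMap.id - e := by rw [Module.End.one_eq_id]
          rwa [h5] at h4
        have hkey := key2 (LinearMap.id - eb) (LinearMap.id - et) (LinearMap.id - e)
          (by
            ext x
            have h6 : eb (eb x) = eb x := congrArg (fun t => t x) hebeb
            simp only [LinearMap.comp_apply, LinearMap.sub_apply, LinearMap.id_apply,
              map_sub, h6]
            abel)
          (by
            ext q
            have h6 : g (et q) = eb (g q) := congrArg (fun t => t q) het'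
            simp only [LinearMap.comp_apply, LinearMap.sub_apply, LinearMap.id_apply,
              map_sub, h6])
          (by
            ext y
            have h6 : f (e y) = et (f y) := congrArg (fun t => t y) he
            simp only [LinearMap.comp_apply, LinearMap.sub_apply, LinearMap.id_apply,
              map_sub, h6])
          hbij2
        ext x
        have h7 := congrArg (fun t => t x) hkey
        simp only [LinearMap.sub_apply, LinearMap.id_apply] at h7
        simpa using sub_eq_self.mp h7
    exact ⟨hXind, hQproj, hg, hsup⟩
end

section
/- Let Λ be an artin algebra with a tilting module T_C lying in C_Λ = Gen(Q̃) ∩ Cogen(Q̃). Then for any projective Λ-module P, if f_P: P → T_P is a minimal left add(T_C)-approximation of P, the module T_P is projective-injective. -/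
open Function LinearMap

section Aux

variable {Λ : Type} [Ring Λ]

/-- A direct summand of something in `add T` is in `add T`. -/
lemma inAddOf_of_summand {T M N : Type} [AddCommGroup T] [Module Λ T]
    [AddCommGroup M] [Module Λ M] [AddCommGroup N] [Module Λ N]
    (hN : InAddOf Λ T N) (p : N →ₗ[Λ] M) (s : M →ₗ[Λ] N)
    (h : p ∘ₗ s = LinearMap.id) : InAddOf Λ T M := by
  obtain ⟨m, p₁, s₁, h₁⟩ := hN
  refine ⟨m, p ∘ₗ p₁, s₁ ∘ₗ s, ?_⟩
  ext x
  have h1 := congrFun (congrArg DFunLike.coe h₁) (s x)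
  have h2 := congrFun (congrArg DFunLike.coe h) x
  simp only [LinearMap.comp_apply, LinearMap.id_apply] at h1 h2 ⊢
  rw [h1, h2]

/-- Finite powers of a module in `add T` are in `add T`. -/
lemma inAddOf_pi {T N : Type} [AddCommGroup T] [Module Λ T]
    [AddCommGroup N] [Module Λ N] (hN : InAddOf Λ T N) (n : ℕ) :
    InAddOf Λ T (Fin n → N) := by
  obtain ⟨m, p, s, h⟩ := hN
  let e : (Fin (n * m) → T) ≃ₗ[Λ] (Fin n → Fin m → T) :=
    (LinearEquiv.funCongrLeft Λ T finProdFinEquiv).trans (LinearEquiv.curry Λ T (Fin n) (Fin m))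
  refine ⟨n * m, (p.compLeft (Fin n)) ∘ₗ e.toLinearMap,
    e.symm.toLinearMap ∘ₗ (s.compLeft (Fin n)), ?_⟩
  apply LinearMap.ext
  intro x
  funext i
  have h1 := congrFun (congrArg DFunLike.coe h) (x i)
  simp only [LinearMap.comp_apply, LinearMap.id_apply, LinearEquiv.coe_coe,
    LinearEquiv.apply_symm_apply, LinearMap.compLeft_apply, Function.comp_apply] at h1 ⊢
  rw [h1]

/-- A direct summand of an injective module is injective. -/
lemma injective_of_summand {Q M : Type} [AddCommGroup Q] [Module Λ Q]
    [AddCommGroup M] [Module Λ M] (hQ : Module.Injective Λ Q)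
    (i : M →ₗ[Λ] Q) (r : Q →ₗ[Λ] M) (h : r ∘ₗ i = LinearMap.id) :
    Module.Injective Λ M := by
  constructor
  intro X Y _ _ _ _ f hf g
  obtain ⟨h', hh'⟩ := hQ.out f hf (i ∘ₗ g)
  refine ⟨r ∘ₗ h', fun x => ?_⟩
  have := congrFun (congrArg DFunLike.coe h) (g x)
  simp only [LinearMap.comp_apply, LinearMap.id_apply] at this ⊢
  rw [hh']
  exact this

/-- Finite powers of an injective module are injective. -/
lemma injective_pi {Q : Type} [AddCommGroup Q] [Module Λ Q]
    (hQ : Module.Injective Λ Q) (n : ℕ) : Module.Injective Λ (Fin n → Q) := by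
  constructor
  intro X Y _ _ _ _ f hf g
  choose h hh using fun i : Fin n => hQ.out f hf ((LinearMap.proj i) ∘ₗ g)
  refine ⟨LinearMap.pi h, fun x => ?_⟩
  ext i
  exact hh i x

/-- Finite powers of a projective module are projective. -/
lemma projective_pi {Q : Type} [AddCommGroup Q] [Module Λ Q]
    (hQ : Module.Projective Λ Q) (n : ℕ) : Module.Projective Λ (Fin n → Q) := by
  haveI : Module.Projective Λ (DirectSum (Fin n) fun _ => Q) :=
    inferInstanceAs (Module.Projective Λ (Π₀ _ : Fin n, Q))
  exact Module.Projective.of_equiv (DirectSum.linearEquivFunOnFintype Λ (Fin n) (fun _ => Q))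

/-- Every finitely generated projective-injective module lies in `add T` for a tilting
module `T`. -/
lemma projInj_inAddOf {T : Type} [AddCommGroup T] [Module Λ T]
    (hT : IsTilting Λ T) (Q : Type) [AddCommGroup Q] [Module Λ Q]
    [Module.Finite Λ Q] (hQp : Module.Projective Λ Q) (hQi : Module.Injective Λ Q) :
    InAddOf Λ T Q := by
  obtain ⟨-, -, T0, T1, fΛ, g, hT0, hT1, hinjf, -, -⟩ := hT
  obtain ⟨n, π, hπ⟩ := Module.Finite.exists_fin' Λ Q
  obtain ⟨s, hs⟩ := Module.projective_lifting_property π LinearMap.id hπ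
  -- `ι : Q → (Fin n → T0)` is injective
  set ι : Q →ₗ[Λ] (Fin n → T0) := (fΛ.compLeft (Fin n)) ∘ₗ s with hι
  have hsinj : Function.Injective ⇑s := by
    intro a b hab
    have ha := congrFun (congrArg DFunLike.coe hs) a
    have hb := congrFun (congrArg DFunLike.coe hs) b
    simp only [LinearMap.comp_apply, LinearMap.id_apply] at ha hb
    rw [← ha, ← hb, hab]
  have hιinj : Function.Injective ⇑ι := by
    intro a b hab
    apply hsinj
    funext i
    exact hinjf (congrFun hab i)
  obtain ⟨r, hr⟩ := hQi.out ι hιinj LinearMap.id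
  exact inAddOf_of_summand (inAddOf_pi hT0 n) r ι (by ext x; exact hr x)

/-- `compLeft` of a surjective map is surjective. -/
lemma compLeft_surjective {M N : Type} [AddCommGroup M] [Module Λ M]
    [AddCommGroup N] [Module Λ N] (f : M →ₗ[Λ] N) (hf : Function.Surjective f) (n : ℕ) :
    Function.Surjective (f.compLeft (Fin n)) := by
  intro y
  choose x hx using fun i => hf (y i)
  exact ⟨x, funext hx⟩

end Aux

theorem stmt9 (Λ : Type) [Ring Λ] (k : Type) [CommRing k] [IsArtinianRing k] [Algebra k Λ]
    [Module.Finite k Λ]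
    (T : Type) [AddCommGroup T] [Module Λ T] [Module.Finite Λ T]
    (hT : IsTilting Λ T) (hTC : MemC Λ T)
    (P : Type) [AddCommGroup P] [Module Λ P] [Module.Finite Λ P]
    (hP : Module.Projective Λ P)
    (TP : Type) [AddCommGroup TP] [Module Λ TP]
    (f : P →ₗ[Λ] TP) (hadd : InAddOf Λ T TP) (hmin : LeftMinimal Λ f)
    (happrox : ∀ (T' : ModuleCat.{0} Λ) (g : P →ₗ[Λ] (T' : Type)), InAddOf Λ T (T' : Type) →
      ∃ h : TP →ₗ[Λ] (T' : Type), h ∘ₗ f = g) :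
    IsProjInj Λ TP := by
  classical
  obtain ⟨m, p, s, hps⟩ := hadd
  obtain ⟨⟨Qc, hQfin, ⟨hQproj, hQinj⟩, π, hπ⟩, -⟩ := hTC
  -- the surjection q : (Fin m → Qc) → TP
  set q : (Fin m → ↥Qc) →ₗ[Λ] TP := p ∘ₗ (π.compLeft (Fin m)) with hq
  have hqsurj : Surjective q := by
    have hpsurj : Surjective p := by
      intro x
      exact ⟨s x, by simpa using congrFun (congrArg DFunLike.coe hps) x⟩
    exact hpsurj.comp (compLeft_surjective π hπ m)
  -- (Fin m → Qc) is in add T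
  have hQ'proj : Module.Projective Λ (Fin m → ↥Qc) := projective_pi hQproj m
  have hQ'inj : Module.Injective Λ (Fin m → ↥Qc) := injective_pi hQinj m
  have haddQ : InAddOf Λ T (Fin m → ↥Qc) := projInj_inAddOf hT _ hQ'proj hQ'inj
  -- lift f through q using projectivity of P
  obtain ⟨u, hu⟩ := Module.projective_lifting_property q f hqsurj
  -- factor u through the approximation f
  obtain ⟨v, hv⟩ := happrox (ModuleCat.of Λ (Fin m → ↥Qc)) u haddQ
  -- q ∘ v is an automorphism by minimality
  have hcomp : (q ∘ₗ v) ∘ₗ f = f := by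
    rw [LinearMap.comp_assoc, hv, hu]
  have hb : Bijective (q ∘ₗ v) := hmin _ hcomp
  let e : TP ≃ₗ[Λ] TP := LinearEquiv.ofBijective (q ∘ₗ v) hb
  have hsplit : (e.symm.toLinearMap ∘ₗ q) ∘ₗ v = LinearMap.id := by
    ext x
    simp only [LinearMap.comp_apply, LinearMap.id_apply, LinearEquiv.coe_coe]
    exact e.symm_apply_apply x
  haveI : Module.Projective Λ (↥(ModuleCat.of Λ (Fin m → ↥Qc))) := hQ'proj
  constructor
  · exact Module.Projective.of_split v (e.symm.toLinearMap ∘ₗ q) hsplit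
  · exact injective_of_summand hQ'inj v (e.symm.toLinearMap ∘ₗ q) hsplit
end
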